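/- arXiv:2605.01274 — 4 statements merged into one kernel-verified Lean document; each statement's English description precedes it below -/
import Mathlib

section
/- Let T > 0 and let Ψ₁, Ψ₂ : (−∞,0]×[0,T] → ℂ be continuously differentiable with ∂ₜΨ₁ + ∂ₓΨ₁ = 0 and ∂ₜΨ₂ − ∂ₓΨ₂ = 0 (the massless Dirac system i ∂ₜΨ₁ = −i ∂ₓΨ₁, i ∂ₜΨ₂ = i ∂ₓΨ₂). Assume that for l = 1,2, Ψₗ(·,s) and ∂ₓΨₗ(·,s) are integrable on (−∞,0] for each s ∈ [0,T], Ψₗ(x,s) → 0 as x → −∞, and |∂ₜΨₗ(x,s)| is dominated uniformly for s ∈ [0,T] by an integrable function of x. Then for every k ∈ ℂ with Im k ≥ 0 and every t ∈ [0,T]: (i) ∫_{−∞}^0 e^{−ikx} Ψ₁(x,0) dx − e^{ikt} ∫_{−∞}^0 e^{−ikx} Ψ₁(x,t) dx − ∫_0^t e^{iks} Ψ₁(0,s) ds = 0; and (ii) ∫_{−∞}^0 e^{−ikx} Ψ₂(x,0) dx − e^{−ikt} ∫_{−∞}^0 e^{−ikx} Ψ₂(x,t) dx + ∫_0^t e^{−iks}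 Ψ₂(0,s) ds = 0. -/
open MeasureTheory Filter intervalIntegral Set

lemma transport_rel
    (T : ℝ) (hT : 0 < T)
    (Ψ : ℝ × ℝ → ℂ)
    (hΨ : ContDiffOn ℝ 1 Ψ (Set.Iic 0 ×ˢ Set.Icc 0 T))
    (ε : ℂ) (hε : ε = 1 ∨ ε = -1)
    (pde : ∀ x ∈ Set.Iic (0:ℝ), ∀ t ∈ Set.Icc (0:ℝ) T,
        derivWithin (fun s : ℝ => Ψ (x, s)) (Set.Icc 0 T) t
          + ε * derivWithin (fun y : ℝ => Ψ (y, t)) (Set.Iic 0) x = 0)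
    (hint1 : ∀ s ∈ Set.Icc (0:ℝ) T, IntegrableOn (fun x => Ψ (x, s)) (Set.Iic 0))
    (hint2 : ∀ s ∈ Set.Icc (0:ℝ) T,
        IntegrableOn (fun x => derivWithin (fun y : ℝ => Ψ (y, s)) (Set.Iic 0) x) (Set.Iic 0))
    (hdecay : ∀ s ∈ Set.Icc (0:ℝ) T, Tendsto (fun x => Ψ (x, s)) atBot (nhds 0))
    (g : ℝ → ℝ) (hg : IntegrableOn g (Set.Iic 0))
    (hgbd : ∀ s ∈ Set.Icc (0:ℝ) T, ∀ x ∈ Set.Iic (0:ℝ),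
        ‖derivWithin (fun r : ℝ => Ψ (x, r)) (Set.Icc 0 T) s‖ ≤ g x)
    (k : ℂ) (hk : 0 ≤ k.im) (t : ℝ) (ht : t ∈ Set.Icc (0:ℝ) T) :
    (∫ x in Set.Iic (0:ℝ), Complex.exp (-Complex.I * k * x) * Ψ (x, 0))
      - Complex.exp (ε * Complex.I * k * t) *
          (∫ x in Set.Iic (0:ℝ), Complex.exp (-Complex.I * k * x) * Ψ (x, t))
      - ε * (∫ s in (0:ℝ)..t, Complex.exp (ε * Complex.I * k * s) * Ψ (0, s)) = 0 := by
  classical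
  set S : Set (ℝ × ℝ) := Set.Iic 0 ×ˢ Set.Icc 0 T with hS
  set w : ℂ := ε * Complex.I * k with hw
  set Dx : ℝ → ℝ → ℂ := fun x s => derivWithin (fun y : ℝ => Ψ (y, s)) (Set.Iic 0) x with hDxdef
  set Dt : ℝ → ℝ → ℂ := fun x s => derivWithin (fun r : ℝ => Ψ (x, r)) (Set.Icc 0 T) s with hDtdef
  have hεnorm : ‖ε‖ = 1 := by rcases hε with rfl | rfl <;> simp
  have hεsq : ε * ε = 1 := by rcases hε with rfl | rfl <;> ring
  have hUD : UniqueDiffOn ℝ S := (uniqueDiffOn_Iic 0).prod (uniqueDiffOn_Icc hT)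
  have hdiff : DifferentiableOn ℝ Ψ S := hΨ.differentiableOn one_ne_zero
  -- slice derivative facts in x
  have hDxfd : ∀ x ∈ Set.Iic (0:ℝ), ∀ s ∈ Set.Icc (0:ℝ) T,
      HasDerivWithinAt (fun y : ℝ => Ψ (y, s))
        (fderivWithin ℝ Ψ S (x, s) ((1:ℝ), (0:ℝ))) (Set.Iic 0) x := by
    intro x hx s hs
    have hfd : HasFDerivWithinAt Ψ (fderivWithin ℝ Ψ S (x, s)) S (x, s) :=
      (hdiff (x, s) ⟨hx, hs⟩).hasFDerivWithinAt
    have hι : HasDerivWithinAt (fun y : ℝ => (y, s)) ((1:ℝ), (0:ℝ)) (Set.Iic 0) x :=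
      ((hasDerivAt_id x).prodMk (hasDerivAt_const x s)).hasDerivWithinAt
    exact hfd.comp_hasDerivWithinAt x hι (fun y hy => (⟨hy, hs⟩ : (y, s) ∈ S))
  have hDxeq : ∀ x ∈ Set.Iic (0:ℝ), ∀ s ∈ Set.Icc (0:ℝ) T,
      Dx x s = fderivWithin ℝ Ψ S (x, s) ((1:ℝ), (0:ℝ)) := fun x hx s hs =>
    (hDxfd x hx s hs).derivWithin (uniqueDiffOn_Iic 0 x hx)
  have hDxW : ∀ x ∈ Set.Iic (0:ℝ), ∀ s ∈ Set.Icc (0:ℝ) T,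
      HasDerivWithinAt (fun y : ℝ => Ψ (y, s)) (Dx x s) (Set.Iic 0) x := by
    intro x hx s hs
    rw [hDxeq x hx s hs]; exact hDxfd x hx s hs
  -- slice derivative facts in t
  have hDtfd : ∀ x ∈ Set.Iic (0:ℝ), ∀ s ∈ Set.Icc (0:ℝ) T,
      HasDerivWithinAt (fun r : ℝ => Ψ (x, r))
        (fderivWithin ℝ Ψ S (x, s) ((0:ℝ), (1:ℝ))) (Set.Icc 0 T) s := by
    intro x hx s hs
    have hfd : HasFDerivWithinAt Ψ (fderivWithin ℝ Ψ S (x, s)) S (x, s) :=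
      (hdiff (x, s) ⟨hx, hs⟩).hasFDerivWithinAt
    have hι : HasDerivWithinAt (fun r : ℝ => (x, r)) ((0:ℝ), (1:ℝ)) (Set.Icc 0 T) s :=
      ((hasDerivAt_const s x).prodMk (hasDerivAt_id s)).hasDerivWithinAt
    exact hfd.comp_hasDerivWithinAt s hι (fun r hr => ⟨hx, hr⟩)
  have hDtW : ∀ x ∈ Set.Iic (0:ℝ), ∀ s ∈ Set.Icc (0:ℝ) T,
      HasDerivWithinAt (fun r : ℝ => Ψ (x, r)) (Dt x s) (Set.Icc 0 T) s := by
    intro x hx s hs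
    have heq : Dt x s = fderivWithin ℝ Ψ S (x, s) ((0:ℝ), (1:ℝ)) :=
      (hDtfd x hx s hs).derivWithin (uniqueDiffOn_Icc hT s hs)
    rw [heq]; exact hDtfd x hx s hs
  -- PDE consequences
  have hpdeDt : ∀ x ∈ Set.Iic (0:ℝ), ∀ s ∈ Set.Icc (0:ℝ) T, Dt x s = -(ε * Dx x s) := by
    intro x hx s hs
    exact eq_neg_of_add_eq_zero_left (pde x hx s hs)
  have hpdeDx : ∀ x ∈ Set.Iic (0:ℝ), ∀ s ∈ Set.Icc (0:ℝ) T, Dx x s = -ε * Dt x s := by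
    intro x hx s hs
    have h := pde x hx s hs
    linear_combination ε * h - Dx x s * hεsq
  have hDxbd : ∀ s ∈ Set.Icc (0:ℝ) T, ∀ x ∈ Set.Iic (0:ℝ), ‖Dx x s‖ ≤ g x := by
    intro s hs x hx
    rw [hpdeDx x hx s hs, norm_mul, norm_neg, hεnorm, one_mul]
    exact hgbd s hs x hx
  have hg0 : ∀ x ∈ Set.Iic (0:ℝ), 0 ≤ g x := fun x hx =>
    (norm_nonneg _).trans (hgbd 0 ⟨le_rfl, hT.le⟩ x hx)
  -- uniform bound on Ψ
  have hΨbd : ∀ s ∈ Set.Icc (0:ℝ) T, ∀ x ∈ Set.Iic (0:ℝ),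
      ‖Ψ (x, s)‖ ≤ ‖Ψ (x, 0)‖ + T * g x := by
    intro s hs x hx
    have h0 : (0:ℝ) ∈ Set.Icc (0:ℝ) T := ⟨le_rfl, hT.le⟩
    have hmvt := Convex.norm_image_sub_le_of_norm_hasDerivWithin_le
      (f := fun r : ℝ => Ψ (x, r)) (f' := fun r => Dt x r) (C := g x)
      (fun r hr => hDtW x hx r hr) (fun r hr => hgbd r hr x hx)
      (convex_Icc 0 T) h0 hs
    have h1 : ‖Ψ (x, s)‖ - ‖Ψ (x, 0)‖ ≤ ‖Ψ (x, s) - Ψ (x, 0)‖ := norm_sub_norm_le _ _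
    have h2 : g x * ‖s - 0‖ ≤ g x * T := by
      have : ‖s - 0‖ = s := by rw [sub_zero, Real.norm_eq_abs, abs_of_nonneg hs.1]
      rw [this]
      exact mul_le_mul_of_nonneg_left hs.2 (hg0 x hx)
    linarith
  -- continuity of slices
  have hΨcont : ContinuousOn Ψ S := hΨ.continuousOn
  have hconts : ∀ s ∈ Set.Icc (0:ℝ) T, ContinuousOn (fun x : ℝ => Ψ (x, s)) (Set.Iic 0) := by
    intro s hs
    exact hΨcont.comp ((continuous_id.prodMk continuous_const).continuousOn)
      (fun x hx => ⟨hx, hs⟩)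
  have hcontt : ∀ x ∈ Set.Iic (0:ℝ), ContinuousOn (fun r : ℝ => Ψ (x, r)) (Set.Icc 0 T) := by
    intro x hx
    exact hΨcont.comp ((continuous_const.prodMk continuous_id).continuousOn)
      (fun r hr => ⟨hx, hr⟩)
  -- joint continuity of Dx
  have hDxcont : ContinuousOn (fun p : ℝ × ℝ => Dx p.1 p.2) S := by
    have hfc : ContinuousOn (fderivWithin ℝ Ψ S) S :=
      hΨ.continuousOn_fderivWithin hUD le_rfl
    have : ContinuousOn (fun p : ℝ × ℝ => fderivWithin ℝ Ψ S p ((1:ℝ), (0:ℝ))) S :=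
      hfc.clm_apply continuousOn_const
    exact this.congr (fun p hp => by
      rcases p with ⟨x, s⟩; exact hDxeq x hp.1 s hp.2)
  -- the function under the double integral
  set H : ℝ × ℝ → ℂ := fun p =>
    Complex.exp (-Complex.I * k * p.1) *
      (Complex.exp (w * p.2) * (w * Ψ p - ε * Dx p.1 p.2)) with hHdef
  have hHcont : ContinuousOn H S := by
    apply ContinuousOn.mul
    · exact (Complex.continuous_exp.comp
        ((continuous_const.mul (Complex.continuous_ofReal.comp continuous_fst)))).continuousOn
    · apply ContinuousOn.mul
      · exact (Complex.continuous_exp.comp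
          ((continuous_const.mul (Complex.continuous_ofReal.comp continuous_snd)))).continuousOn
      · exact (hΨcont.const_smul w |>.sub (hDxcont.const_smul ε))
  -- bounds on exponentials
  have hexp_x_le : ∀ x : ℝ, x ≤ 0 → ‖Complex.exp (-Complex.I * k * x)‖ ≤ 1 := by
    intro x hx
    rw [Complex.norm_exp]
    rw [Real.exp_le_one_iff]
    have : (-Complex.I * k * x).re = k.im * x := by
      simp [Complex.mul_re, Complex.mul_im]
    rw [this]
    exact mul_nonpos_of_nonneg_of_nonpos hk hx
  have hexp_s_le : ∀ s : ℝ, 0 ≤ s → s ≤ T → ‖Complex.exp (w * s)‖ ≤ Real.exp (‖w‖ * T) := by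
    intro s hs0 hsT
    rw [Complex.norm_exp, Real.exp_le_exp]
    have h1 : (w * s).re = w.re * s := by simp [Complex.mul_re]
    rw [h1]
    have h2 : w.re ≤ ‖w‖ := Complex.re_le_norm w
    nlinarith [norm_nonneg w, Complex.abs_re_le_norm w, abs_nonneg w.re,
      le_abs_self w.re]
  -- time FTC for each x
  have hFTCt : ∀ x ∈ Set.Iic (0:ℝ),
      Complex.exp (w * t) * Ψ (x, t) - Ψ (x, 0)
        = ∫ s in (0:ℝ)..t, Complex.exp (w * s) * (w * Ψ (x, s) - ε * Dx x s) := by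
    intro x hx
    have hsub : Set.Icc (0:ℝ) t ⊆ Set.Icc (0:ℝ) T := Set.Icc_subset_Icc le_rfl ht.2
    have hcontf : ContinuousOn (fun s : ℝ => Complex.exp (w * s) * Ψ (x, s)) (Set.Icc 0 t) := by
      apply ContinuousOn.mul
      · exact (Complex.continuous_exp.comp
          (continuous_const.mul Complex.continuous_ofReal)).continuousOn
      · exact (hcontt x hx).mono hsub
    have hDtconts : ContinuousOn (fun s : ℝ => Dt x s) (Set.Icc 0 T) := by
      have hfc : ContinuousOn (fderivWithin ℝ Ψ S) S :=
        hΨ.continuousOn_fderivWithin hUD le_rfl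
      have h1 : ContinuousOn (fun p : ℝ × ℝ => fderivWithin ℝ Ψ S p ((0:ℝ), (1:ℝ))) S :=
        hfc.clm_apply continuousOn_const
      have h2 : ContinuousOn (fun s : ℝ => fderivWithin ℝ Ψ S (x, s) ((0:ℝ), (1:ℝ)))
          (Set.Icc 0 T) :=
        h1.comp ((continuous_const.prodMk continuous_id).continuousOn) (fun r hr => ⟨hx, hr⟩)
      exact h2.congr (fun s hs => by
        exact ((hDtfd x hx s hs).derivWithin (uniqueDiffOn_Icc hT s hs)))
    have hEq : ∀ s ∈ Set.Icc (0:ℝ) T,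
        Complex.exp (w * s) * (w * Ψ (x, s) - ε * Dx x s)
          = Complex.exp (w * s) * (w * 1) * Ψ (x, s) + Complex.exp (w * s) * Dt x s := by
      intro s hs
      rw [hpdeDt x hx s hs]; ring
    have hintble : IntervalIntegrable
        (fun s : ℝ => Complex.exp (w * s) * (w * Ψ (x, s) - ε * Dx x s)) volume 0 t := by
      apply ContinuousOn.intervalIntegrable
      rw [Set.uIcc_of_le ht.1]
      have hc : ContinuousOn
          (fun s : ℝ => Complex.exp (w * s) * (w * 1) * Ψ (x, s)
            + Complex.exp (w * s) * Dt x s) (Set.Icc 0 t) := by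
        apply ContinuousOn.add
        · exact (((Complex.continuous_exp.comp
            (continuous_const.mul Complex.continuous_ofReal)).mul
            continuous_const).continuousOn).mul ((hcontt x hx).mono hsub)
        · exact ((Complex.continuous_exp.comp
            (continuous_const.mul Complex.continuous_ofReal)).continuousOn).mul
            (hDtconts.mono hsub)
      exact hc.congr (fun s hs => hEq s (hsub hs))
    have hder : ∀ s ∈ Set.Ioo (0:ℝ) t,
        HasDerivWithinAt (fun s : ℝ => Complex.exp (w * s) * Ψ (x, s))
          (Complex.exp (w * s) * (w * Ψ (x, s) - ε * Dx x s)) (Set.Ioi s) s := by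
      intro s hs
      have hsIcc : s ∈ Set.Icc (0:ℝ) T := ⟨hs.1.le, hs.2.le.trans ht.2⟩
      have hmem : Set.Icc (0:ℝ) T ∈ nhds s :=
        Icc_mem_nhds hs.1 (lt_of_lt_of_le hs.2 ht.2)
      have hΨt : HasDerivAt (fun r : ℝ => Ψ (x, r)) (Dt x s) s :=
        (hDtW x hx s hsIcc).hasDerivAt hmem
      have h1 : HasDerivAt (fun r : ℝ => w * (r : ℂ)) (w * 1) s := by
        simpa using (Complex.ofRealCLM.hasDerivAt (x := s)).const_mul w
      have hexp : HasDerivAt (fun r : ℝ => Complex.exp (w * r))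
          (Complex.exp (w * s) * (w * 1)) s := h1.cexp
      have hprod := hexp.mul hΨt
      rw [hEq s hsIcc]
      exact hprod.hasDerivWithinAt
    have := integral_eq_sub_of_hasDeriv_right_of_le ht.1 hcontf hder hintble
    rw [this]
    norm_num
  -- integrability of slices against the exponential
  have hexpmeas : ∀ s : ℝ, AEStronglyMeasurable (fun x : ℝ => Complex.exp (-Complex.I * k * x))
      (volume.restrict (Set.Iic 0)) :=
    fun s => (Complex.continuous_exp.comp
      (continuous_const.mul Complex.continuous_ofReal)).aestronglyMeasurable
  have hintU : ∀ s ∈ Set.Icc (0:ℝ) T,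
      IntegrableOn (fun x : ℝ => Complex.exp (-Complex.I * k * x) * Ψ (x, s)) (Set.Iic 0) := by
    intro s hs
    apply Integrable.mono' ((hint1 s hs).norm)
    · exact (hexpmeas s).mul ((hint1 s hs)).aestronglyMeasurable
    · filter_upwards [ae_restrict_mem measurableSet_Iic] with x hx
      rw [norm_mul]
      calc ‖Complex.exp (-Complex.I * k * x)‖ * ‖Ψ (x, s)‖
          ≤ 1 * ‖Ψ (x, s)‖ :=
            mul_le_mul_of_nonneg_right (hexp_x_le x hx) (norm_nonneg _)
        _ = ‖Ψ (x, s)‖ := one_mul _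
  -- inner x-integral identity
  have hinner : ∀ s ∈ Set.Icc (0:ℝ) T,
      (∫ x in Set.Iic (0:ℝ), H (x, s))
        = -ε * (Complex.exp (w * s) * Ψ (0, s)) := by
    intro s hs
    set u : ℝ → ℂ := fun x => Complex.exp (-Complex.I * k * x) * Ψ (x, s) with hu
    set u' : ℝ → ℂ := fun x =>
      Complex.exp (-Complex.I * k * x) * (Dx x s - Complex.I * k * Ψ (x, s)) with hu'
    have hcontu : ContinuousOn u (Set.Iic 0) := by
      apply ContinuousOn.mul
      · exact (Complex.continuous_exp.comp
          (continuous_const.mul Complex.continuous_ofReal)).continuousOn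
      · exact hconts s hs
    have hderu : ∀ x ∈ Set.Iio (0:ℝ), HasDerivAt u (u' x) x := by
      intro x hx
      have hΨx : HasDerivAt (fun y : ℝ => Ψ (y, s)) (Dx x s) x :=
        (hDxW x (Set.Iio_subset_Iic_self hx) s hs).hasDerivAt (Iic_mem_nhds hx)
      have h1 : HasDerivAt (fun y : ℝ => -Complex.I * k * (y : ℂ)) (-Complex.I * k * 1) x := by
        simpa using (Complex.ofRealCLM.hasDerivAt (x := x)).const_mul (-Complex.I * k)
      have hexp : HasDerivAt (fun y : ℝ => Complex.exp (-Complex.I * k * y))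
          (Complex.exp (-Complex.I * k * x) * (-Complex.I * k * 1)) x := h1.cexp
      have hprod := hexp.mul hΨx
      have : u' x = Complex.exp (-Complex.I * k * x) * (-Complex.I * k * 1) * Ψ (x, s)
          + Complex.exp (-Complex.I * k * x) * Dx x s := by
        rw [hu']; ring
      rw [this]
      exact hprod
    have hintu' : IntegrableOn u' (Set.Iic 0) := by
      have hv : IntegrableOn (fun x : ℝ => Dx x s - Complex.I * k * Ψ (x, s)) (Set.Iic 0) :=
        (hint2 s hs).sub ((hint1 s hs).const_mul (Complex.I * k))
      apply Integrable.mono' hv.norm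
      · exact (hexpmeas s).mul hv.aestronglyMeasurable
      · filter_upwards [ae_restrict_mem measurableSet_Iic] with x hx
        rw [hu', norm_mul]
        calc ‖Complex.exp (-Complex.I * k * x)‖ * ‖Dx x s - Complex.I * k * Ψ (x, s)‖
            ≤ 1 * ‖Dx x s - Complex.I * k * Ψ (x, s)‖ :=
              mul_le_mul_of_nonneg_right (hexp_x_le x hx) (norm_nonneg _)
          _ = ‖Dx x s - Complex.I * k * Ψ (x, s)‖ := one_mul _
    have htend : Tendsto u atBot (nhds 0) := by
      apply squeeze_zero_norm' (a := fun x => ‖Ψ (x, s)‖)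
      · filter_upwards [Iic_mem_atBot (0:ℝ)] with x hx
        rw [hu, norm_mul]
        calc ‖Complex.exp (-Complex.I * k * x)‖ * ‖Ψ (x, s)‖
            ≤ 1 * ‖Ψ (x, s)‖ :=
              mul_le_mul_of_nonneg_right (hexp_x_le x hx) (norm_nonneg _)
          _ = ‖Ψ (x, s)‖ := one_mul _
      · simpa using (hdecay s hs).norm
    have hFTCx : ∫ x in Set.Iic (0:ℝ), u' x = Ψ (0, s) := by
      have := integral_Iic_of_hasDerivAt_of_tendsto
        (hcontu 0 Set.self_mem_Iic) hderu hintu' htend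
      rw [this, hu]
      norm_num
    have hHu : ∀ x : ℝ, H (x, s) = (-ε * Complex.exp (w * s)) * u' x := by
      intro x
      rw [hHdef, hu', hw]
      ring
    calc (∫ x in Set.Iic (0:ℝ), H (x, s))
        = ∫ x in Set.Iic (0:ℝ), (-ε * Complex.exp (w * s)) * u' x := by
          exact setIntegral_congr_fun measurableSet_Iic (fun x _ => hHu x)
      _ = (-ε * Complex.exp (w * s)) * ∫ x in Set.Iic (0:ℝ), u' x := integral_const_mul _ _
      _ = -ε * (Complex.exp (w * s) * Ψ (0, s)) := by rw [hFTCx]; ring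
  -- integrability of H on the product
  have hprodint : Integrable (Function.uncurry fun x s => H (x, s))
      ((volume.restrict (Set.Iic 0)).prod (volume.restrict (Set.Ioc 0 t))) := by
    have hsub : Set.Iic (0:ℝ) ×ˢ Set.Ioc (0:ℝ) t ⊆ S := by
      intro p hp
      exact ⟨hp.1, ⟨hp.2.1.le, hp.2.2.trans ht.2⟩⟩
    have hmeasH : AEStronglyMeasurable (Function.uncurry fun x s => H (x, s))
        ((volume.restrict (Set.Iic 0)).prod (volume.restrict (Set.Ioc 0 t))) := by
      rw [Measure.prod_restrict]
      have : ContinuousOn H (Set.Iic (0:ℝ) ×ˢ Set.Ioc (0:ℝ) t) := hHcont.mono hsub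
      exact (this.aestronglyMeasurable (measurableSet_Iic.prod measurableSet_Ioc))
    set Gx : ℝ → ℝ := fun x => Real.exp (‖w‖ * T) * (‖w‖ * (‖Ψ (x, 0)‖ + T * g x) + g x)
      with hGx
    have hGxint : IntegrableOn Gx (Set.Iic 0) := by
      apply Integrable.const_mul
      exact ((((hint1 0 ⟨le_rfl, hT.le⟩).norm.add (hg.const_mul T)).const_mul ‖w‖).add hg)
    have hone : Integrable (fun _ : ℝ => (1:ℝ)) (volume.restrict (Set.Ioc 0 t)) := by
      rw [integrable_const_iff]
      right
      exact isFiniteMeasure_restrict.mpr measure_Ioc_lt_top.ne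
    have hdomint : Integrable (fun p : ℝ × ℝ => Gx p.1 * (1:ℝ))
        ((volume.restrict (Set.Iic 0)).prod (volume.restrict (Set.Ioc 0 t))) :=
      hGxint.mul_prod hone
    apply Integrable.mono' hdomint hmeasH
    rw [Measure.prod_restrict]
    filter_upwards [ae_restrict_mem (measurableSet_Iic.prod measurableSet_Ioc)] with p hp
    rcases hp with ⟨hp1, hp2⟩
    rcases p with ⟨x, s⟩
    simp only [Function.uncurry]
    have hsIcc : s ∈ Set.Icc (0:ℝ) T := ⟨hp2.1.le, hp2.2.trans ht.2⟩
    have hnorm : ‖H (x, s)‖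
        = ‖Complex.exp (-Complex.I * k * x)‖ * (‖Complex.exp (w * s)‖
            * ‖w * Ψ (x, s) - ε * Dx x s‖) := by
      rw [hHdef]; simp [norm_mul]
    rw [hnorm, mul_one]
    have h3 : ‖w * Ψ (x, s) - ε * Dx x s‖ ≤ ‖w‖ * (‖Ψ (x, 0)‖ + T * g x) + g x := by
      calc ‖w * Ψ (x, s) - ε * Dx x s‖
          ≤ ‖w * Ψ (x, s)‖ + ‖ε * Dx x s‖ := norm_sub_le _ _
        _ = ‖w‖ * ‖Ψ (x, s)‖ + ‖Dx x s‖ := by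
            rw [norm_mul w (Ψ (x, s)), norm_mul ε (Dx x s), hεnorm, one_mul]
        _ ≤ ‖w‖ * (‖Ψ (x, 0)‖ + T * g x) + g x := by
            have := hΨbd s hsIcc x hp1
            have := hDxbd s hsIcc x hp1
            have := norm_nonneg w
            nlinarith [norm_nonneg (Ψ (x, s))]
    have h1 := hexp_x_le x hp1
    have h2 := hexp_s_le s hp2.1.le (hp2.2.trans ht.2)
    rw [hGx]
    have hnn : (0:ℝ) ≤ ‖Complex.exp (w * s)‖ * ‖w * Ψ (x, s) - ε * Dx x s‖ :=
      mul_nonneg (norm_nonneg _) (norm_nonneg _)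
    calc ‖Complex.exp (-Complex.I * k * x)‖ * (‖Complex.exp (w * s)‖
            * ‖w * Ψ (x, s) - ε * Dx x s‖)
        ≤ 1 * (‖Complex.exp (w * s)‖ * ‖w * Ψ (x, s) - ε * Dx x s‖) :=
          mul_le_mul_of_nonneg_right h1 hnn
      _ = ‖Complex.exp (w * s)‖ * ‖w * Ψ (x, s) - ε * Dx x s‖ := one_mul _
      _ ≤ Real.exp (‖w‖ * T) * (‖w‖ * (‖Ψ (x, 0)‖ + T * g x) + g x) := by
          apply mul_le_mul h2 h3 (norm_nonneg _) (Real.exp_nonneg _)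
  -- main computation
  set A : ℂ := ∫ x in Set.Iic (0:ℝ), Complex.exp (-Complex.I * k * x) * Ψ (x, 0) with hA
  set B : ℂ := ∫ x in Set.Iic (0:ℝ), Complex.exp (-Complex.I * k * x) * Ψ (x, t) with hB
  have claim1 : Complex.exp (w * t) * B - A
      = ∫ x in Set.Iic (0:ℝ), ∫ s in (0:ℝ)..t, H (x, s) := by
    have h1 : Complex.exp (w * t) * B
        = ∫ x in Set.Iic (0:ℝ), Complex.exp (w * t)
            * (Complex.exp (-Complex.I * k * x) * Ψ (x, t)) := by
      rw [hB, MeasureTheory.integral_const_mul]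
    rw [h1, hA, ← MeasureTheory.integral_sub]
    · apply setIntegral_congr_fun measurableSet_Iic
      intro x hx
      have := hFTCt x hx
      calc Complex.exp (w * t) * (Complex.exp (-Complex.I * k * x) * Ψ (x, t))
            - Complex.exp (-Complex.I * k * x) * Ψ (x, 0)
          = Complex.exp (-Complex.I * k * x)
              * (Complex.exp (w * t) * Ψ (x, t) - Ψ (x, 0)) := by ring
        _ = Complex.exp (-Complex.I * k * x)
              * ∫ s in (0:ℝ)..t, Complex.exp (w * s) * (w * Ψ (x, s) - ε * Dx x s) := by
            rw [this]
        _ = ∫ s in (0:ℝ)..t, H (x, s) := by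
            rw [← intervalIntegral.integral_const_mul]
    · exact (hintU t ht).const_mul _
    · exact hintU 0 ⟨le_rfl, hT.le⟩
  have claim2 : (∫ x in Set.Iic (0:ℝ), ∫ s in (0:ℝ)..t, H (x, s))
      = ∫ s in (0:ℝ)..t, ∫ x in Set.Iic (0:ℝ), H (x, s) := by
    have h1 : (∫ x in Set.Iic (0:ℝ), ∫ s in (0:ℝ)..t, H (x, s))
        = ∫ x in Set.Iic (0:ℝ), ∫ s in Set.Ioc (0:ℝ) t, H (x, s) := by
      apply setIntegral_congr_fun measurableSet_Iic
      intro x _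
      exact intervalIntegral.integral_of_le ht.1
    have h2 : (∫ s in (0:ℝ)..t, ∫ x in Set.Iic (0:ℝ), H (x, s))
        = ∫ s in Set.Ioc (0:ℝ) t, ∫ x in Set.Iic (0:ℝ), H (x, s) := by
      rw [intervalIntegral.integral_of_le ht.1]
    rw [h1, h2]
    exact integral_integral_swap hprodint
  have claim3 : (∫ s in (0:ℝ)..t, ∫ x in Set.Iic (0:ℝ), H (x, s))
      = -ε * ∫ s in (0:ℝ)..t, Complex.exp (w * s) * Ψ (0, s) := by
    rw [← intervalIntegral.integral_const_mul]
    apply intervalIntegral.integral_congr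
    intro s hs
    rw [Set.uIcc_of_le ht.1] at hs
    exact hinner s ⟨hs.1, hs.2.trans ht.2⟩
  have key : Complex.exp (w * t) * B - A
      = -ε * ∫ s in (0:ℝ)..t, Complex.exp (w * s) * Ψ (0, s) := by
    rw [claim1, claim2, claim3]
  rw [hw] at key
  linear_combination -key

/-- Global relations for the massless Dirac system (two decoupled transport equations)
on the negative half-line `(-∞,0]` up to time `T`, valid for every `k ∈ ℂ` with
`Im k ≥ 0`. -/
theorem massless_dirac_global_relations_neg_halfline
    (T : ℝ) (hT : 0 < T)
    (Ψ₁ Ψ₂ : ℝ × ℝ → ℂ)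
    (hΨ₁ : ContDiffOn ℝ 1 Ψ₁ (Set.Iic 0 ×ˢ Set.Icc 0 T))
    (hΨ₂ : ContDiffOn ℝ 1 Ψ₂ (Set.Iic 0 ×ˢ Set.Icc 0 T))
    (pde₁ : ∀ x ∈ Set.Iic (0:ℝ), ∀ t ∈ Set.Icc (0:ℝ) T,
        derivWithin (fun s : ℝ => Ψ₁ (x, s)) (Set.Icc 0 T) t
          + derivWithin (fun y : ℝ => Ψ₁ (y, t)) (Set.Iic 0) x = 0)
    (pde₂ : ∀ x ∈ Set.Iic (0:ℝ), ∀ t ∈ Set.Icc (0:ℝ) T,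
        derivWithin (fun s : ℝ => Ψ₂ (x, s)) (Set.Icc 0 T) t
          - derivWithin (fun y : ℝ => Ψ₂ (y, t)) (Set.Iic 0) x = 0)
    (hint : ∀ Ψ ∈ [Ψ₁, Ψ₂], ∀ s ∈ Set.Icc (0:ℝ) T,
        IntegrableOn (fun x => Ψ (x, s)) (Set.Iic 0) ∧
        IntegrableOn (fun x => derivWithin (fun y : ℝ => Ψ (y, s)) (Set.Iic 0) x)
          (Set.Iic 0))
    (hdecay : ∀ Ψ ∈ [Ψ₁, Ψ₂], ∀ s ∈ Set.Icc (0:ℝ) T,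
        Tendsto (fun x => Ψ (x, s)) atBot (nhds 0))
    (hdom : ∀ Ψ ∈ [Ψ₁, Ψ₂], ∃ g : ℝ → ℝ, IntegrableOn g (Set.Iic 0) ∧
        ∀ s ∈ Set.Icc (0:ℝ) T, ∀ x ∈ Set.Iic (0:ℝ),
          ‖derivWithin (fun r : ℝ => Ψ (x, r)) (Set.Icc 0 T) s‖ ≤ g x) :
    ∀ k : ℂ, 0 ≤ k.im → ∀ t ∈ Set.Icc (0:ℝ) T,
      ((∫ x in Set.Iic (0:ℝ), Complex.exp (-Complex.I * k * x) * Ψ₁ (x, 0))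
        - Complex.exp (Complex.I * k * t) *
            (∫ x in Set.Iic (0:ℝ), Complex.exp (-Complex.I * k * x) * Ψ₁ (x, t))
        - (∫ s in (0:ℝ)..t, Complex.exp (Complex.I * k * s) * Ψ₁ (0, s)) = 0) ∧
      ((∫ x in Set.Iic (0:ℝ), Complex.exp (-Complex.I * k * x) * Ψ₂ (x, 0))
        - Complex.exp (-Complex.I * k * t) *
            (∫ x in Set.Iic (0:ℝ), Complex.exp (-Complex.I * k * x) * Ψ₂ (x, t))
        + (∫ s in (0:ℝ)..t, Complex.exp (-Complex.I * k * s) * Ψ₂ (0, s)) = 0) := by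
  intro k hk t ht
  have hm1 : Ψ₁ ∈ [Ψ₁, Ψ₂] := by simp
  have hm2 : Ψ₂ ∈ [Ψ₁, Ψ₂] := by simp
  obtain ⟨g₁, hg₁, hgbd₁⟩ := hdom Ψ₁ hm1
  obtain ⟨g₂, hg₂, hgbd₂⟩ := hdom Ψ₂ hm2
  constructor
  · have h1 := transport_rel T hT Ψ₁ hΨ₁ 1 (Or.inl rfl)
      (fun x hx s hs => by rw [one_mul]; exact pde₁ x hx s hs)
      (fun s hs => (hint Ψ₁ hm1 s hs).1)
      (fun s hs => (hint Ψ₁ hm1 s hs).2)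
      (hdecay Ψ₁ hm1) g₁ hg₁ hgbd₁ k hk t ht
    simpa using h1
  · have h2 := transport_rel T hT Ψ₂ hΨ₂ (-1) (Or.inr rfl)
      (fun x hx s hs => by
        have := pde₂ x hx s hs
        linear_combination this)
      (fun s hs => (hint Ψ₂ hm2 s hs).1)
      (fun s hs => (hint Ψ₂ hm2 s hs).2)
      (hdecay Ψ₂ hm2) g₂ hg₂ hgbd₂ k hk t ht
    simp only [show ((-1:ℂ)) * Complex.I = -Complex.I from by ring] at h2
    linear_combination h2
end

section
/- Let T > 0 and let Ψ₁, Ψ₂ : [0,∞)×[0,T] → ℂ be continuously differentiable with ∂ₜΨ₁ + ∂ₓΨ₁ = 0 and ∂ₜΨ₂ − ∂ₓΨ₂ = 0 (the massless Dirac system i ∂ₜΨ₁ = −i ∂ₓΨ₁, i ∂ₜΨ₂ = i ∂ₓΨ₂). Assume that for l = 1,2, Ψₗ(·,s) and ∂ₓΨₗ(·,s) are integrable on [0,∞) for each s ∈ [0,T], Ψₗ(x,s) → 0 as x → +∞, and |∂ₜΨₗ(x,s)| is dominated uniformly for s ∈ [0,T] by an integrable function of x. Then for every k ∈ ℂ with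 Im k ≤ 0 and every t ∈ [0,T]: (i) ∫_0^∞ e^{−ikx} Ψ₁(x,0) dx − e^{ikt} ∫_0^∞ e^{−ikx} Ψ₁(x,t) dx + ∫_0^t e^{iks} Ψ₁(0,s) ds = 0; and (ii) ∫_0^∞ e^{−ikx} Ψ₂(x,0) dx − e^{−ikt} ∫_0^∞ e^{−ikx} Ψ₂(x,t) dx − ∫_0^t e^{−iks} Ψ₂(0,s) ds = 0. -/
open MeasureTheory Filter intervalIntegral Set

private lemma hasDerivAt_cexp_real (c : ℂ) (x : ℝ) :
    HasDerivAt (fun x : ℝ => Complex.exp (c * x)) (c * Complex.exp (c * x)) x := by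
  have h0 : HasDerivAt (fun x : ℝ => ((x : ℂ))) 1 x := by
    simpa using (hasDerivAt_id x).ofReal_comp
  have h1 : HasDerivAt (fun x : ℝ => c * (x : ℂ)) c x := by
    simpa using h0.const_mul c
  simpa [mul_comm] using h1.cexp

private lemma dirac_key
    (T : ℝ) (hT : 0 < T) (Ψ : ℝ × ℝ → ℂ) (ε : ℂ)
    (hΨ : ContDiffOn ℝ 1 Ψ (Set.Ici 0 ×ˢ Set.Icc 0 T))
    (pde : ∀ x ∈ Set.Ici (0:ℝ), ∀ t ∈ Set.Icc (0:ℝ) T,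
        derivWithin (fun s : ℝ => Ψ (x, s)) (Set.Icc 0 T) t
          + ε * derivWithin (fun y : ℝ => Ψ (y, t)) (Set.Ici 0) x = 0)
    (hint : ∀ s ∈ Set.Icc (0:ℝ) T,
        IntegrableOn (fun x => Ψ (x, s)) (Set.Ici 0) ∧
        IntegrableOn (fun x => derivWithin (fun y : ℝ => Ψ (y, s)) (Set.Ici 0) x)
          (Set.Ici 0))
    (hdecay : ∀ s ∈ Set.Icc (0:ℝ) T, Tendsto (fun x => Ψ (x, s)) atTop (nhds 0))
    (g : ℝ → ℝ) (hg : IntegrableOn g (Set.Ici 0))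
    (hgb : ∀ s ∈ Set.Icc (0:ℝ) T, ∀ x ∈ Set.Ici (0:ℝ),
        ‖derivWithin (fun r : ℝ => Ψ (x, r)) (Set.Icc 0 T) s‖ ≤ g x)
    (k : ℂ) (hk : k.im ≤ 0) (t : ℝ) (ht : t ∈ Set.Icc 0 T) :
    (∫ x in Set.Ici (0:ℝ), Complex.exp (-Complex.I * k * x) * Ψ (x, 0))
      - Complex.exp (ε * Complex.I * k * t) *
          (∫ x in Set.Ici (0:ℝ), Complex.exp (-Complex.I * k * x) * Ψ (x, t))
      + ε * (∫ s in (0:ℝ)..t, Complex.exp (ε * Complex.I * k * s) * Ψ (0, s)) = 0 := by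
  set E : ℝ → ℂ := fun x => Complex.exp (-Complex.I * k * x) with hE
  have hEcont : Continuous E := by
    apply Complex.continuous_exp.comp
    exact (continuous_const.mul Complex.continuous_ofReal)
  have hE1 : ∀ x : ℝ, 0 ≤ x → ‖E x‖ ≤ 1 := by
    intro x hx
    have : ‖E x‖ = Real.exp ((-Complex.I * k * x).re) := by
      simp [hE, Complex.norm_exp]
    rw [this, Real.exp_le_one_iff]
    have : (-Complex.I * k * (x:ℂ)).re = k.im * x := by
      simp [Complex.mul_re, Complex.mul_im]
    rw [this]
    exact mul_nonpos_of_nonpos_of_nonneg hk hx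
  have hE0 : E 0 = 1 := by simp [hE]
  -- slices
  have A1 : ∀ s ∈ Icc (0:ℝ) T, ContDiffOn ℝ 1 (fun y => Ψ (y, s)) (Ici 0) := by
    intro s hs
    exact hΨ.comp ((contDiff_id.prodMk contDiff_const).contDiffOn)
      (fun y hy => Set.mk_mem_prod hy hs)
  have A2 : ∀ x ∈ Ici (0:ℝ), ContDiffOn ℝ 1 (fun s => Ψ (x, s)) (Icc 0 T) := by
    intro x hx
    exact hΨ.comp ((contDiff_const.prodMk contDiff_id).contDiffOn)
      (fun s hs => Set.mk_mem_prod hx hs)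
  have hDx : ∀ s ∈ Icc (0:ℝ) T, ∀ x : ℝ, 0 < x →
      HasDerivAt (fun y => Ψ (y, s)) (derivWithin (fun y => Ψ (y, s)) (Ici 0) x) x := by
    intro s hs x hx
    have hnb : Set.Ici (0:ℝ) ∈ nhds x := Ici_mem_nhds hx
    have hd := (A1 s hs x (le_of_lt hx)).differentiableWithinAt one_ne_zero
    rw [derivWithin_of_mem_nhds hnb]
    exact (hd.differentiableAt hnb).hasDerivAt
  have hDt : ∀ x ∈ Ici (0:ℝ), ∀ s ∈ Ioo (0:ℝ) T,
      HasDerivAt (fun r => Ψ (x, r)) (derivWithin (fun r => Ψ (x, r)) (Icc 0 T) s) s := by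
    intro x hx s hs
    have hnb : Set.Icc (0:ℝ) T ∈ nhds s := Icc_mem_nhds hs.1 hs.2
    have hd := (A2 x hx s (Ioo_subset_Icc_self hs)).differentiableWithinAt one_ne_zero
    rw [derivWithin_of_mem_nhds hnb]
    exact (hd.differentiableAt hnb).hasDerivAt
  have hg0 : ∀ x ∈ Ici (0:ℝ), 0 ≤ g x := fun x hx =>
    le_trans (norm_nonneg _) (hgb 0 ⟨le_refl 0, hT.le⟩ x hx)
  -- pointwise bound on Ψ
  have hΨbd : ∀ s ∈ Icc (0:ℝ) T, ∀ x ∈ Ici (0:ℝ), ‖Ψ (x, s)‖ ≤ ‖Ψ (x, 0)‖ + T * g x := by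
    intro s hs x hx
    have hmv := Convex.norm_image_sub_le_of_norm_hasDerivWithin_le
      (f := fun r => Ψ (x, r)) (f' := fun r => derivWithin (fun r => Ψ (x, r)) (Icc 0 T) r)
      (C := g x)
      (fun r hr => ((A2 x hx r hr).differentiableWithinAt one_ne_zero).hasDerivWithinAt)
      (fun r hr => hgb r hr x hx) (convex_Icc 0 T) ⟨le_refl 0, hT.le⟩ hs
    have h1 : ‖Ψ (x, s) - Ψ (x, 0)‖ ≤ g x * T := by
      refine hmv.trans ?_
      have : ‖s - (0:ℝ)‖ = s := by rw [sub_zero, Real.norm_eq_abs, abs_of_nonneg hs.1]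
      rw [this]
      exact mul_le_mul_of_nonneg_left hs.2 (hg0 x hx)
    calc ‖Ψ (x, s)‖ = ‖Ψ (x, 0) + (Ψ (x, s) - Ψ (x, 0))‖ := by ring_nf
      _ ≤ ‖Ψ (x, 0)‖ + ‖Ψ (x, s) - Ψ (x, 0)‖ := norm_add_le _ _
      _ ≤ ‖Ψ (x, 0)‖ + T * g x := by rw [mul_comm T (g x)]; exact add_le_add_right h1 _
  -- integrability of the weighted integrands
  have hintE : ∀ s ∈ Icc (0:ℝ) T, IntegrableOn (fun x => E x * Ψ (x, s)) (Ici 0) := by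
    intro s hs
    refine Integrable.mono' ((hint s hs).1.norm) ?_ ?_
    · exact (hEcont.aestronglyMeasurable).mul (hint s hs).1.aestronglyMeasurable
    · filter_upwards [ae_restrict_mem measurableSet_Ici] with x hx
      rw [norm_mul]
      exact mul_le_of_le_one_left (norm_nonneg _) (hE1 x hx)
  have hintED : ∀ s ∈ Icc (0:ℝ) T,
      IntegrableOn (fun x => E x * derivWithin (fun y => Ψ (y, s)) (Ici 0) x) (Ici 0) := by
    intro s hs
    refine Integrable.mono' ((hint s hs).2.norm) ?_ ?_
    · exact (hEcont.aestronglyMeasurable).mul (hint s hs).2.aestronglyMeasurable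
    · filter_upwards [ae_restrict_mem measurableSet_Ici] with x hx
      rw [norm_mul]
      exact mul_le_of_le_one_left (norm_nonneg _) (hE1 x hx)
  -- Part B : integration by parts in x
  have hIBP : ∀ s ∈ Icc (0:ℝ) T,
      (∫ x in Ici (0:ℝ), E x * derivWithin (fun y => Ψ (y, s)) (Ici 0) x)
        = -Ψ (0, s) + Complex.I * k * ∫ x in Ici (0:ℝ), E x * Ψ (x, s) := by
    intro s hs
    set D : ℝ → ℂ := fun x => derivWithin (fun y => Ψ (y, s)) (Ici 0) x with hD
    set u : ℝ → ℂ := fun x => E x * Ψ (x, s) with hu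
    set u' : ℝ → ℂ := fun x => E x * D x + (-Complex.I * k) * (E x * Ψ (x, s)) with hu'
    have hderiv : ∀ x ∈ Ioi (0:ℝ), HasDerivAt u (u' x) x := by
      intro x hx
      have h1 : HasDerivAt E ((-Complex.I * k) * E x) x := hasDerivAt_cexp_real _ x
      have h2 := hDx s hs x hx
      have h3 : HasDerivAt (fun y => E y * Ψ (y, s)) _ x := h1.mul h2
      convert h3 using 1
      simp only [hu', hD]
      ring
    have hu'int : IntegrableOn u' (Ioi 0) := by
      have h1 : IntegrableOn u' (Ici 0) := by
        exact (hintED s hs).add ((hintE s hs).const_mul (-Complex.I * k))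
      exact h1.mono_set Ioi_subset_Ici_self
    have hut : Tendsto u atTop (nhds 0) := by
      have hnorm : Tendsto (fun x => ‖Ψ (x, s)‖) atTop (nhds 0) := by
        simpa using (hdecay s hs).norm
      refine squeeze_zero_norm' ?_ hnorm
      filter_upwards [eventually_ge_atTop (0:ℝ)] with x hx
      rw [norm_mul]
      exact mul_le_of_le_one_left (norm_nonneg _) (hE1 x hx)
    have hucont : ContinuousWithinAt u (Ici 0) 0 := by
      have : ContinuousOn u (Ici 0) := hEcont.continuousOn.mul (A1 s hs).continuousOn
      exact this 0 (self_mem_Ici)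
    have hFTC := integral_Ioi_of_hasDerivAt_of_tendsto hucont hderiv hu'int hut
    have hsplit : ∫ x in Ioi (0:ℝ), u' x
        = (∫ x in Ioi (0:ℝ), E x * D x)
          + (-Complex.I * k) * ∫ x in Ioi (0:ℝ), E x * Ψ (x, s) := by
      have h1 : IntegrableOn (fun x => E x * D x) (Ioi 0) :=
        (hintED s hs).mono_set Ioi_subset_Ici_self
      have h2 : IntegrableOn (fun x => (-Complex.I * k) * (E x * Ψ (x, s))) (Ioi 0) := by
        have h2' : IntegrableOn (fun x => (-Complex.I * k) * (E x * Ψ (x, s))) (Ici 0) :=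
          (hintE s hs).const_mul (-Complex.I * k)
        exact h2'.mono_set Ioi_subset_Ici_self
      rw [MeasureTheory.integral_add h1 h2, MeasureTheory.integral_const_mul]
    have hu0 : u 0 = Ψ (0, s) := by rw [hu]; simp [hE0]
    rw [hsplit, hu0] at hFTC
    rw [integral_Ici_eq_integral_Ioi, integral_Ici_eq_integral_Ioi]
    have := hFTC
    linear_combination this
  -- Part C : F and its continuity
  set F : ℝ → ℂ := fun s => ∫ x in Ici (0:ℝ), E x * Ψ (x, s) with hF
  have hFcont : ContinuousOn F (Icc 0 T) := by
    apply continuousOn_of_dominated (bound := fun x => ‖Ψ (x, 0)‖ + T * g x)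
    · intro s hs
      exact (hintE s hs).aestronglyMeasurable
    · intro s hs
      filter_upwards [ae_restrict_mem measurableSet_Ici] with x hx
      calc ‖E x * Ψ (x, s)‖ ≤ ‖Ψ (x, s)‖ := by
            rw [norm_mul]; exact mul_le_of_le_one_left (norm_nonneg _) (hE1 x hx)
        _ ≤ ‖Ψ (x, 0)‖ + T * g x := hΨbd s hs x hx
    · exact (hint 0 ⟨le_refl 0, hT.le⟩).1.norm.add (hg.const_mul T)
    · filter_upwards [ae_restrict_mem measurableSet_Ici] with x hx
      exact continuousOn_const.mul (A2 x hx).continuousOn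
  -- Part D : derivative of F
  have hF' : ∀ s ∈ Ioo (0:ℝ) T,
      HasDerivAt F (ε * Ψ (0, s) - ε * (Complex.I * k) * F s) s := by
    intro s hs
    have hsIcc : s ∈ Icc (0:ℝ) T := Ioo_subset_Icc_self hs
    set r : ℝ := min s (T - s) with hr
    have hrpos : 0 < r := lt_min hs.1 (sub_pos.2 hs.2)
    have hball : Metric.ball s r ⊆ Ioo 0 T := by
      intro y hy
      rw [Metric.mem_ball, Real.dist_eq] at hy
      have h1 := abs_lt.1 hy
      have h2 : r ≤ s := min_le_left _ _
      have h3 : r ≤ T - s := min_le_right _ _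
      constructor
      · linarith [h1.1]
      · linarith [h1.2]
    have hmeq : ∀ x ∈ Ici (0:ℝ),
        E x * derivWithin (fun r => Ψ (x, r)) (Icc 0 T) s
          = (-ε) * (E x * derivWithin (fun y => Ψ (y, s)) (Ici 0) x) := by
      intro x hx
      have hpde := pde x hx s hsIcc
      have h4 : derivWithin (fun r => Ψ (x, r)) (Icc 0 T) s
          = -(ε * derivWithin (fun y => Ψ (y, s)) (Ici 0) x) := by linear_combination hpde
      rw [h4]; ring
    have key := hasDerivAt_integral_of_dominated_loc_of_deriv_le
      (μ := volume.restrict (Ici 0))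
      (F := fun σ x => E x * Ψ (x, σ))
      (F' := fun σ x => E x * derivWithin (fun r => Ψ (x, r)) (Icc 0 T) σ)
      (x₀ := s) (bound := g) (Metric.ball_mem_nhds s hrpos)
      (by
        have hmem : Icc (0:ℝ) T ∈ nhds s := Icc_mem_nhds hs.1 hs.2
        exact eventually_of_mem hmem fun σ hσ => (hintE σ hσ).aestronglyMeasurable)
      (hintE s hsIcc)
      (by
        refine AEStronglyMeasurable.congr
          (((hintED s hsIcc).aestronglyMeasurable).const_mul (-ε)) ?_
        filter_upwards [ae_restrict_mem measurableSet_Ici] with x hx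
        exact (hmeq x hx).symm)
      (by
        filter_upwards [ae_restrict_mem measurableSet_Ici] with x hx
        intro σ hσ
        have hσ' : σ ∈ Icc (0:ℝ) T := Ioo_subset_Icc_self (hball hσ)
        calc ‖E x * derivWithin (fun r => Ψ (x, r)) (Icc 0 T) σ‖
            ≤ ‖derivWithin (fun r => Ψ (x, r)) (Icc 0 T) σ‖ := by
              rw [norm_mul]; exact mul_le_of_le_one_left (norm_nonneg _) (hE1 x hx)
          _ ≤ g x := hgb σ hσ' x hx)
      hg
      (by
        filter_upwards [ae_restrict_mem measurableSet_Ici] with x hx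
        intro σ hσ
        exact HasDerivAt.const_mul (E x) (hDt x hx σ (hball hσ)))
    have hval : (∫ x in Ici (0:ℝ), E x * derivWithin (fun r => Ψ (x, r)) (Icc 0 T) s)
        = ε * Ψ (0, s) - ε * (Complex.I * k) * F s := by
      have h5 : (∫ x in Ici (0:ℝ), E x * derivWithin (fun r => Ψ (x, r)) (Icc 0 T) s)
          = ∫ x in Ici (0:ℝ), (-ε) * (E x * derivWithin (fun y => Ψ (y, s)) (Ici 0) x) :=
        setIntegral_congr_fun measurableSet_Ici hmeq
      rw [h5, MeasureTheory.integral_const_mul, hIBP s hsIcc]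
      rw [hF]
      ring
    rw [← hval]
    exact key.2
  -- Part E : FTC in time on [0, t]
  set G : ℝ → ℂ := fun s => Complex.exp (ε * Complex.I * k * s) * F s with hG
  have hexpc : Continuous (fun s : ℝ => Complex.exp (ε * Complex.I * k * s)) :=
    Complex.continuous_exp.comp (continuous_const.mul Complex.continuous_ofReal)
  have hGcont : ContinuousOn G (Icc 0 t) :=
    hexpc.continuousOn.mul (hFcont.mono (Icc_subset_Icc_right ht.2))
  have hGderiv : ∀ s ∈ Ioo (0:ℝ) t,
      HasDerivWithinAt G (ε * (Complex.exp (ε * Complex.I * k * s) * Ψ (0, s))) (Ioi s) s := by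
    intro s hs
    have hsT : s ∈ Ioo (0:ℝ) T := ⟨hs.1, lt_of_lt_of_le hs.2 ht.2⟩
    have h1 : HasDerivAt (fun s : ℝ => Complex.exp (ε * Complex.I * k * s))
        ((ε * Complex.I * k) * Complex.exp (ε * Complex.I * k * s)) s :=
      hasDerivAt_cexp_real _ s
    have h2 := h1.mul (hF' s hsT)
    have h3 : (ε * Complex.I * k) * Complex.exp (ε * Complex.I * k * s) * F s
        + Complex.exp (ε * Complex.I * k * s) * (ε * Ψ (0, s) - ε * (Complex.I * k) * F s)
        = ε * (Complex.exp (ε * Complex.I * k * s) * Ψ (0, s)) := by ring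
    rw [h3] at h2
    exact h2.hasDerivWithinAt
  have hGint : IntervalIntegrable
      (fun s => ε * (Complex.exp (ε * Complex.I * k * s) * Ψ (0, s))) volume 0 t := by
    apply ContinuousOn.intervalIntegrable
    rw [uIcc_of_le ht.1]
    refine ContinuousOn.mul continuousOn_const (ContinuousOn.mul hexpc.continuousOn ?_)
    exact ((A2 0 self_mem_Ici).continuousOn).mono (Icc_subset_Icc_right ht.2)
  have hFTC2 := integral_eq_sub_of_hasDeriv_right_of_le ht.1 hGcont hGderiv hGint
  have hG0 : G 0 = F 0 := by simp [hG]
  have hGt : G t = Complex.exp (ε * Complex.I * k * t) * F t := rfl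
  rw [intervalIntegral.integral_const_mul, hG0, hGt] at hFTC2
  show F 0 - Complex.exp (ε * Complex.I * k * t) * F t
      + ε * (∫ s in (0:ℝ)..t, Complex.exp (ε * Complex.I * k * s) * Ψ (0, s)) = 0
  linear_combination hFTC2

/-- Global relations for the massless Dirac system (two decoupled transport equations)
on the positive half-line `[0,∞)` up to time `T`, valid for every `k ∈ ℂ` with
`Im k ≤ 0`. -/
theorem massless_dirac_global_relations_pos_halfline
    (T : ℝ) (hT : 0 < T)
    (Ψ₁ Ψ₂ : ℝ × ℝ → ℂ)
    (hΨ₁ : ContDiffOn ℝ 1 Ψ₁ (Set.Ici 0 ×ˢ Set.Icc 0 T))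
    (hΨ₂ : ContDiffOn ℝ 1 Ψ₂ (Set.Ici 0 ×ˢ Set.Icc 0 T))
    (pde₁ : ∀ x ∈ Set.Ici (0:ℝ), ∀ t ∈ Set.Icc (0:ℝ) T,
        derivWithin (fun s : ℝ => Ψ₁ (x, s)) (Set.Icc 0 T) t
          + derivWithin (fun y : ℝ => Ψ₁ (y, t)) (Set.Ici 0) x = 0)
    (pde₂ : ∀ x ∈ Set.Ici (0:ℝ), ∀ t ∈ Set.Icc (0:ℝ) T,
        derivWithin (fun s : ℝ => Ψ₂ (x, s)) (Set.Icc 0 T) t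
          - derivWithin (fun y : ℝ => Ψ₂ (y, t)) (Set.Ici 0) x = 0)
    (hint : ∀ Ψ ∈ [Ψ₁, Ψ₂], ∀ s ∈ Set.Icc (0:ℝ) T,
        IntegrableOn (fun x => Ψ (x, s)) (Set.Ici 0) ∧
        IntegrableOn (fun x => derivWithin (fun y : ℝ => Ψ (y, s)) (Set.Ici 0) x)
          (Set.Ici 0))
    (hdecay : ∀ Ψ ∈ [Ψ₁, Ψ₂], ∀ s ∈ Set.Icc (0:ℝ) T,
        Tendsto (fun x => Ψ (x, s)) atTop (nhds 0))
    (hdom : ∀ Ψ ∈ [Ψ₁, Ψ₂], ∃ g : ℝ → ℝ, IntegrableOn g (Set.Ici 0) ∧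
        ∀ s ∈ Set.Icc (0:ℝ) T, ∀ x ∈ Set.Ici (0:ℝ),
          ‖derivWithin (fun r : ℝ => Ψ (x, r)) (Set.Icc 0 T) s‖ ≤ g x) :
    ∀ k : ℂ, k.im ≤ 0 → ∀ t ∈ Set.Icc (0:ℝ) T,
      ((∫ x in Set.Ici (0:ℝ), Complex.exp (-Complex.I * k * x) * Ψ₁ (x, 0))
        - Complex.exp (Complex.I * k * t) *
            (∫ x in Set.Ici (0:ℝ), Complex.exp (-Complex.I * k * x) * Ψ₁ (x, t))
        + (∫ s in (0:ℝ)..t, Complex.exp (Complex.I * k * s) * Ψ₁ (0, s)) = 0) ∧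
      ((∫ x in Set.Ici (0:ℝ), Complex.exp (-Complex.I * k * x) * Ψ₂ (x, 0))
        - Complex.exp (-Complex.I * k * t) *
            (∫ x in Set.Ici (0:ℝ), Complex.exp (-Complex.I * k * x) * Ψ₂ (x, t))
        - (∫ s in (0:ℝ)..t, Complex.exp (-Complex.I * k * s) * Ψ₂ (0, s)) = 0) := by
  intro k hk t ht
  have hm₁ : Ψ₁ ∈ [Ψ₁, Ψ₂] := by simp
  have hm₂ : Ψ₂ ∈ [Ψ₁, Ψ₂] := by simp
  constructor
  · obtain ⟨g, hg, hgb⟩ := hdom Ψ₁ hm₁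
    have key := dirac_key T hT Ψ₁ 1 hΨ₁
      (by
        intro x hx s hs
        have := pde₁ x hx s hs
        linear_combination this)
      (hint Ψ₁ hm₁) (hdecay Ψ₁ hm₁) g hg hgb k hk t ht
    simp only [one_mul] at key
    exact key
  · obtain ⟨g, hg, hgb⟩ := hdom Ψ₂ hm₂
    have key := dirac_key T hT Ψ₂ (-1) hΨ₂
      (by
        intro x hx s hs
        have := pde₂ x hx s hs
        linear_combination this)
      (hint Ψ₂ hm₂) (hdecay Ψ₂ hm₂) g hg hgb k hk t ht
    simp only [neg_one_mul, ← sub_eq_add_neg] at key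
    exact key
end

section
/- Let L > 0, T > 0 and let Ψ₁, Ψ₂ : [−L,0]×[0,T] → ℂ be continuously differentiable with ∂ₜΨ₁ + ∂ₓΨ₁ = 0 and ∂ₜΨ₂ − ∂ₓΨ₂ = 0 (the massless Dirac system i ∂ₜΨ₁ = −i ∂ₓΨ₁, i ∂ₜΨ₂ = i ∂ₓΨ₂). Then for every k ∈ ℂ and every t ∈ [0,T]: (i) ∫_{−L}^0 e^{−ikx} Ψ₁(x,0) dx + e^{ikL} ∫_0^t e^{iks} Ψ₁(−L,s) ds − e^{ikt} ∫_{−L}^0 e^{−ikx} Ψ₁(x,t) dx − ∫_0^t e^{iks} Ψ₁(0,s) ds = 0; and (ii) ∫_{−L}^0 e^{−ikx} Ψ₂(x,0) dx − e^{ikL} ∫_0^t e^{−iks} Ψ₂(−L,s) ds − e^{−ikt} ∫_{−L}^0 e^{−ikx} Ψ₂(x,t) dx + ∫_0^t e^{−iks} Ψ₂(0,s) ds = 0. -/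
open intervalIntegral MeasureTheory Set

private lemma dirac_fubini_cont {f : ℝ → ℝ → ℂ} {a b c d : ℝ} (hab : a ≤ b) (hcd : c ≤ d)
    (hf : ContinuousOn (Function.uncurry f) (Set.Icc a b ×ˢ Set.Icc c d)) :
    ∫ x in a..b, ∫ y in c..d, f x y = ∫ y in c..d, ∫ x in a..b, f x y := by
  have hint : IntegrableOn (Function.uncurry f) (Set.Ioc a b ×ˢ Set.Ioc c d) volume :=
    (hf.integrableOn_compact (isCompact_Icc.prod isCompact_Icc)).mono_set
      (Set.prod_mono Set.Ioc_subset_Icc_self Set.Ioc_subset_Icc_self)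
  have hint' : Integrable (Function.uncurry f)
      ((volume.restrict (Set.Ioc a b)).prod (volume.restrict (Set.Ioc c d))) := by
    rw [Measure.prod_restrict, ← Measure.volume_eq_prod]; exact hint
  simp only [intervalIntegral.integral_of_le hab, intervalIntegral.integral_of_le hcd]
  exact MeasureTheory.integral_integral_swap hint'

private lemma transport_relation (L T : ℝ) (hL : 0 < L) (hT : 0 < T) (k ε : ℂ)
    (Ψ : ℝ × ℝ → ℂ)
    (hΨ : ContDiffOn ℝ 1 Ψ (Set.Icc (-L) 0 ×ˢ Set.Icc 0 T))
    (pde : ∀ p ∈ Set.Icc (-L) 0 ×ˢ Set.Icc (0:ℝ) T,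
      fderivWithin ℝ Ψ (Set.Icc (-L) 0 ×ˢ Set.Icc 0 T) p (0, 1)
        + ε * fderivWithin ℝ Ψ (Set.Icc (-L) 0 ×ˢ Set.Icc 0 T) p (1, 0) = 0)
    (t : ℝ) (ht : t ∈ Set.Icc (0:ℝ) T) :
    Complex.exp (ε * Complex.I * k * t) *
        (∫ x in (-L)..(0:ℝ), Complex.exp (-Complex.I * k * x) * Ψ (x, t))
      - (∫ x in (-L)..(0:ℝ), Complex.exp (-Complex.I * k * x) * Ψ (x, 0))
      + ε * ((∫ s in (0:ℝ)..t, Complex.exp (ε * Complex.I * k * s) * Ψ (0, s))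
        - Complex.exp (Complex.I * k * L) *
            (∫ s in (0:ℝ)..t, Complex.exp (ε * Complex.I * k * s) * Ψ (-L, s))) = 0 := by
  set S : Set (ℝ × ℝ) := Set.Icc (-L) 0 ×ˢ Set.Icc 0 T with hSdef
  have hLneg : (-L : ℝ) ≤ 0 := by linarith
  have hS : UniqueDiffOn ℝ S := (uniqueDiffOn_Icc (by linarith)).prod (uniqueDiffOn_Icc hT)
  set B : ℝ × ℝ → ℂ := fun p => fderivWithin ℝ Ψ S p (0, 1) with hBdef
  set A : ℝ × ℝ → ℂ := fun p => fderivWithin ℝ Ψ S p (1, 0) with hAdef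
  have hC : ContinuousOn Ψ S := hΨ.continuousOn
  have hfd : ContinuousOn (fderivWithin ℝ Ψ S) S := hΨ.continuousOn_fderivWithin hS le_rfl
  have hAcont : ContinuousOn A S := hfd.clm_apply continuousOn_const
  have hBcont : ContinuousOn B S := hfd.clm_apply continuousOn_const
  -- slice derivatives
  have sliceT : ∀ p ∈ S, HasDerivWithinAt (fun s => Ψ (p.1, s)) (B p) (Set.Icc 0 T) p.2 := by
    rintro ⟨x, s⟩ hp
    have hF := ((hΨ.differentiableOn one_ne_zero) _ hp).hasFDerivWithinAt
    have hline : HasDerivWithinAt (fun s : ℝ => ((x : ℝ), s)) ((0 : ℝ), (1 : ℝ))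
        (Set.Icc 0 T) s := ((hasDerivAt_const s x).prodMk (hasDerivAt_id s)).hasDerivWithinAt
    exact hF.comp_hasDerivWithinAt s hline (fun u hu => ⟨hp.1, hu⟩)
  have sliceX : ∀ p ∈ S, HasDerivWithinAt (fun y => Ψ (y, p.2)) (A p) (Set.Icc (-L) 0) p.1 := by
    rintro ⟨x, s⟩ hp
    have hF := ((hΨ.differentiableOn one_ne_zero) _ hp).hasFDerivWithinAt
    have hline : HasDerivWithinAt (fun y : ℝ => (y, s)) ((1 : ℝ), (0 : ℝ))
        (Set.Icc (-L) 0) x := ((hasDerivAt_id x).prodMk (hasDerivAt_const x s)).hasDerivWithinAt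
    exact hF.comp_hasDerivWithinAt x hline (fun u hu => (⟨hu, hp.2⟩ : (u, s) ∈ Set.Icc (-L) 0 ×ˢ Set.Icc (0:ℝ) T))
  -- continuity of slices
  have cexp1 : ∀ c : ℂ, Continuous fun u : ℝ => Complex.exp (c * u) := by
    intro c; exact Complex.continuous_exp.comp (continuous_const.mul Complex.continuous_ofReal)
  -- FTC in time
  have FTCs : ∀ x ∈ Set.Icc (-L) (0:ℝ),
      (∫ s in (0:ℝ)..t, Complex.exp (ε * Complex.I * k * s) *
          (ε * Complex.I * k * Ψ (x, s) + B (x, s)))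
        = Complex.exp (ε * Complex.I * k * t) * Ψ (x, t) - Ψ (x, 0) := by
    intro x hx
    have hsubT : Set.Icc (0:ℝ) t ⊆ Set.Icc 0 T := Set.Icc_subset_Icc le_rfl ht.2
    have hmem : ∀ s ∈ Set.Icc (0:ℝ) t, ((x, s) : ℝ × ℝ) ∈ S := fun s hs => ⟨hx, hsubT hs⟩
    have hΨcont : ContinuousOn (fun s => Ψ (x, s)) (Set.Icc 0 t) :=
      (hC.comp ((continuous_const.prodMk continuous_id).continuousOn) hmem)
    have hcont : ContinuousOn (fun s : ℝ => Complex.exp (ε * Complex.I * k * s) * Ψ (x, s))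
        (Set.Icc 0 t) := ((cexp1 _).continuousOn).mul hΨcont
    have hBx : ContinuousOn (fun s => B (x, s)) (Set.Icc 0 t) :=
      hBcont.comp ((continuous_const.prodMk continuous_id).continuousOn) hmem
    have hint : IntervalIntegrable (fun s => Complex.exp (ε * Complex.I * k * s) *
        (ε * Complex.I * k * Ψ (x, s) + B (x, s))) volume 0 t := by
      apply ContinuousOn.intervalIntegrable
      rw [Set.uIcc_of_le ht.1]
      exact ((cexp1 _).continuousOn).mul ((continuousOn_const.mul hΨcont).add hBx)
    have hderiv : ∀ s ∈ Set.Ioo (0:ℝ) t,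
        HasDerivWithinAt (fun s : ℝ => Complex.exp (ε * Complex.I * k * s) * Ψ (x, s))
          (Complex.exp (ε * Complex.I * k * s) * (ε * Complex.I * k * Ψ (x, s) + B (x, s)))
          (Set.Ioi s) s := by
      intro s hs
      have hsmem : s ∈ Set.Icc (0:ℝ) T := ⟨hs.1.le, hs.2.le.trans ht.2⟩
      have hB := sliceT (x, s) ⟨hx, hsmem⟩
      have hexp : HasDerivAt (fun s : ℝ => Complex.exp (ε * Complex.I * k * s))
          (Complex.exp (ε * Complex.I * k * s) * (ε * Complex.I * k)) s := by
        have h1 : HasDerivAt (fun s : ℝ => (ε * Complex.I * k) * (s : ℂ))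
            (ε * Complex.I * k) s := by
          simpa using (Complex.ofRealCLM.hasDerivAt (x := s)).const_mul (ε * Complex.I * k)
        exact h1.cexp
      have := (hexp.hasDerivWithinAt.mul hB)
      have h2 : HasDerivWithinAt (fun s : ℝ => Complex.exp (ε * Complex.I * k * s) * Ψ (x, s))
          (Complex.exp (ε * Complex.I * k * s) * (ε * Complex.I * k * Ψ (x, s) + B (x, s)))
          (Set.Icc 0 T) s := by
        exact this.congr_deriv (by ring)
      exact h2.mono_of_mem_nhdsWithin (Icc_mem_nhdsGT_of_mem ⟨hs.1.le, hs.2.trans_le ht.2⟩)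
    have := intervalIntegral.integral_eq_sub_of_hasDeriv_right_of_le ht.1 hcont hderiv hint
    rw [this]
    norm_num
  -- FTC in space
  have FTCx : ∀ s ∈ Set.Icc (0:ℝ) t,
      (∫ x in (-L)..(0:ℝ), Complex.exp (-Complex.I * k * x) *
          (-Complex.I * k * Ψ (x, s) + A (x, s)))
        = Ψ (0, s) - Complex.exp (Complex.I * k * L) * Ψ (-L, s) := by
    intro s hs
    have hsmem : s ∈ Set.Icc (0:ℝ) T := ⟨hs.1, hs.2.trans ht.2⟩
    have hmem : ∀ x ∈ Set.Icc (-L) (0:ℝ), ((x, s) : ℝ × ℝ) ∈ S := fun x hx => ⟨hx, hsmem⟩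
    have hΨcont : ContinuousOn (fun x => Ψ (x, s)) (Set.Icc (-L) 0) :=
      (hC.comp ((continuous_id.prodMk continuous_const).continuousOn) hmem)
    have hcont : ContinuousOn (fun x : ℝ => Complex.exp (-Complex.I * k * x) * Ψ (x, s))
        (Set.Icc (-L) 0) := ((cexp1 _).continuousOn).mul hΨcont
    have hAx : ContinuousOn (fun x => A (x, s)) (Set.Icc (-L) 0) :=
      hAcont.comp ((continuous_id.prodMk continuous_const).continuousOn) hmem
    have hint : IntervalIntegrable (fun x => Complex.exp (-Complex.I * k * x) *
        (-Complex.I * k * Ψ (x, s) + A (x, s))) volume (-L) 0 := by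
      apply ContinuousOn.intervalIntegrable
      rw [Set.uIcc_of_le hLneg]
      exact ((cexp1 _).continuousOn).mul ((continuousOn_const.mul hΨcont).add hAx)
    have hderiv : ∀ x ∈ Set.Ioo (-L) (0:ℝ),
        HasDerivWithinAt (fun x : ℝ => Complex.exp (-Complex.I * k * x) * Ψ (x, s))
          (Complex.exp (-Complex.I * k * x) * (-Complex.I * k * Ψ (x, s) + A (x, s)))
          (Set.Ioi x) x := by
      intro x hx
      have hxmem : x ∈ Set.Icc (-L) (0:ℝ) := ⟨hx.1.le, hx.2.le⟩
      have hA := sliceX (x, s) ⟨hxmem, hsmem⟩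
      have hexp : HasDerivAt (fun x : ℝ => Complex.exp (-Complex.I * k * x))
          (Complex.exp (-Complex.I * k * x) * (-Complex.I * k)) x := by
        have h1 : HasDerivAt (fun x : ℝ => (-Complex.I * k) * (x : ℂ))
            (-Complex.I * k) x := by
          simpa using (Complex.ofRealCLM.hasDerivAt (x := x)).const_mul (-Complex.I * k)
        exact h1.cexp
      have := (hexp.hasDerivWithinAt.mul hA)
      have h2 : HasDerivWithinAt (fun x : ℝ => Complex.exp (-Complex.I * k * x) * Ψ (x, s))
          (Complex.exp (-Complex.I * k * x) * (-Complex.I * k * Ψ (x, s) + A (x, s)))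
          (Set.Icc (-L) 0) x := by
        exact this.congr_deriv (by ring)
      exact h2.mono_of_mem_nhdsWithin (Icc_mem_nhdsGT_of_mem ⟨hx.1.le, hx.2⟩)
    have := intervalIntegral.integral_eq_sub_of_hasDeriv_right_of_le hLneg hcont hderiv hint
    rw [this]
    have : Complex.exp (-Complex.I * k * ((-L : ℝ) : ℂ)) = Complex.exp (Complex.I * k * L) := by
      push_cast; ring_nf
    norm_num [this]
  -- assembly
  have hsubT : Set.Icc (0:ℝ) t ⊆ Set.Icc 0 T := Set.Icc_subset_Icc le_rfl ht.2
  have hsub : Set.Icc (-L) 0 ×ˢ Set.Icc (0:ℝ) t ⊆ S := Set.prod_mono subset_rfl hsubT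
  set F : ℝ → ℝ → ℂ := fun x s => Complex.exp (-Complex.I * k * x) *
      (Complex.exp (ε * Complex.I * k * s) * (ε * Complex.I * k * Ψ (x, s) + B (x, s)))
    with hFdef
  set H : ℝ → ℝ → ℂ := fun x s => (ε * Complex.exp (ε * Complex.I * k * s)) *
      (Complex.exp (-Complex.I * k * x) * (-Complex.I * k * Ψ (x, s) + A (x, s)))
    with hHdef
  have hzero : ∀ x ∈ Set.Icc (-L) (0:ℝ), ∀ s ∈ Set.Icc (0:ℝ) t, F x s = - H x s := by
    intro x hx s hs
    have hp := pde (x, s) ⟨hx, hsubT hs⟩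
    simp only [hFdef, hHdef, hBdef, hAdef]
    linear_combination (Complex.exp (-Complex.I * k * x) *
      Complex.exp (ε * Complex.I * k * s)) * hp
  have key : (∫ x in (-L)..(0:ℝ), ∫ s in (0:ℝ)..t, F x s)
      = - ∫ x in (-L)..(0:ℝ), ∫ s in (0:ℝ)..t, H x s := by
    rw [← intervalIntegral.integral_neg]
    apply intervalIntegral.integral_congr
    intro x hx
    rw [Set.uIcc_of_le hLneg] at hx
    dsimp only
    rw [← intervalIntegral.integral_neg]
    apply intervalIntegral.integral_congr
    intro s hs
    rw [Set.uIcc_of_le ht.1] at hs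
    exact hzero x hx s hs
  have h1 : (∫ x in (-L)..(0:ℝ), ∫ s in (0:ℝ)..t, F x s)
      = Complex.exp (ε * Complex.I * k * t) *
          (∫ x in (-L)..(0:ℝ), Complex.exp (-Complex.I * k * x) * Ψ (x, t))
        - (∫ x in (-L)..(0:ℝ), Complex.exp (-Complex.I * k * x) * Ψ (x, 0)) := by
    have e1 : (∫ x in (-L)..(0:ℝ), ∫ s in (0:ℝ)..t, F x s)
        = ∫ x in (-L)..(0:ℝ),
            (Complex.exp (ε * Complex.I * k * t) *
              (Complex.exp (-Complex.I * k * x) * Ψ (x, t))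
            - Complex.exp (-Complex.I * k * x) * Ψ (x, 0)) := by
      apply intervalIntegral.integral_congr
      intro x hx
      rw [Set.uIcc_of_le hLneg] at hx
      simp only [hFdef]
      rw [intervalIntegral.integral_const_mul, FTCs x hx]
      ring
    have hΨt : ContinuousOn (fun x => Ψ (x, t)) (Set.Icc (-L) 0) :=
      hC.comp ((continuous_id.prodMk continuous_const).continuousOn) (fun x hx => ⟨hx, ht⟩)
    have hΨ0 : ContinuousOn (fun x => Ψ (x, 0)) (Set.Icc (-L) 0) :=
      hC.comp ((continuous_id.prodMk continuous_const).continuousOn)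
        (fun x hx => ⟨hx, le_rfl, hT.le⟩)
    have i1 : IntervalIntegrable (fun x : ℝ => Complex.exp (ε * Complex.I * k * t) *
        (Complex.exp (-Complex.I * k * x) * Ψ (x, t))) volume (-L) 0 := by
      apply ContinuousOn.intervalIntegrable
      rw [Set.uIcc_of_le hLneg]
      exact continuousOn_const.mul (((cexp1 _).continuousOn).mul hΨt)
    have i2 : IntervalIntegrable (fun x : ℝ =>
        Complex.exp (-Complex.I * k * x) * Ψ (x, 0)) volume (-L) 0 := by
      apply ContinuousOn.intervalIntegrable
      rw [Set.uIcc_of_le hLneg]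
      exact ((cexp1 _).continuousOn).mul hΨ0
    rw [e1, intervalIntegral.integral_sub i1 i2, intervalIntegral.integral_const_mul]
  have hHcont : ContinuousOn (Function.uncurry H) (Set.Icc (-L) 0 ×ˢ Set.Icc (0:ℝ) t) := by
    simp only [hHdef, Function.uncurry]
    have hΨc : ContinuousOn (fun p : ℝ × ℝ => Ψ (p.1, p.2)) (Set.Icc (-L) 0 ×ˢ Set.Icc (0:ℝ) t) := by
      apply (hC.mono hsub).comp (continuous_fst.prodMk continuous_snd).continuousOn
      intro p hp; simpa using hp
    have hAc : ContinuousOn (fun p : ℝ × ℝ => A (p.1, p.2)) (Set.Icc (-L) 0 ×ˢ Set.Icc (0:ℝ) t) := by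
      apply (hAcont.mono hsub).comp (continuous_fst.prodMk continuous_snd).continuousOn
      intro p hp; simpa using hp
    exact (continuous_const.mul ((cexp1 (ε * Complex.I * k)).comp continuous_snd)).continuousOn.mul
      ((((cexp1 (-Complex.I * k)).comp continuous_fst).continuousOn).mul
        ((continuousOn_const.mul hΨc).add hAc))
  have h2 : (∫ x in (-L)..(0:ℝ), ∫ s in (0:ℝ)..t, H x s)
      = ε * (∫ s in (0:ℝ)..t, Complex.exp (ε * Complex.I * k * s) * Ψ (0, s))
        - ε * Complex.exp (Complex.I * k * L) *
            (∫ s in (0:ℝ)..t, Complex.exp (ε * Complex.I * k * s) * Ψ (-L, s)) := by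
    rw [dirac_fubini_cont hLneg ht.1 hHcont]
    have e2 : (∫ s in (0:ℝ)..t, ∫ x in (-L)..(0:ℝ), H x s)
        = ∫ s in (0:ℝ)..t,
            (ε * (Complex.exp (ε * Complex.I * k * s) * Ψ (0, s))
            - ε * Complex.exp (Complex.I * k * L) *
                (Complex.exp (ε * Complex.I * k * s) * Ψ (-L, s))) := by
      apply intervalIntegral.integral_congr
      intro s hs
      rw [Set.uIcc_of_le ht.1] at hs
      simp only [hHdef]
      rw [intervalIntegral.integral_const_mul, FTCx s hs]
      ring
    have hΨ0s : ContinuousOn (fun s => Ψ (0, s)) (Set.Icc (0:ℝ) t) :=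
      hC.comp ((continuous_const.prodMk continuous_id).continuousOn)
        (fun s hs => ⟨⟨hLneg, le_rfl⟩, hsubT hs⟩)
    have hΨLs : ContinuousOn (fun s => Ψ (-L, s)) (Set.Icc (0:ℝ) t) :=
      hC.comp ((continuous_const.prodMk continuous_id).continuousOn)
        (fun s hs => ⟨⟨le_rfl, hLneg⟩, hsubT hs⟩)
    have i1 : IntervalIntegrable (fun s : ℝ => ε *
        (Complex.exp (ε * Complex.I * k * s) * Ψ (0, s))) volume 0 t := by
      apply ContinuousOn.intervalIntegrable
      rw [Set.uIcc_of_le ht.1]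
      exact continuousOn_const.mul (((cexp1 _).continuousOn).mul hΨ0s)
    have i2 : IntervalIntegrable (fun s : ℝ => ε * Complex.exp (Complex.I * k * L) *
        (Complex.exp (ε * Complex.I * k * s) * Ψ (-L, s))) volume 0 t := by
      apply ContinuousOn.intervalIntegrable
      rw [Set.uIcc_of_le ht.1]
      exact continuousOn_const.mul (((cexp1 _).continuousOn).mul hΨLs)
    rw [e2, intervalIntegral.integral_sub i1 i2, intervalIntegral.integral_const_mul,
      intervalIntegral.integral_const_mul]
  linear_combination -h1 - h2 + key


/-- Global relations for the massless Dirac system (two decoupled transport equations)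
on the rectangle `[-L,0] × [0,T]`, valid for every complex `k`. -/
theorem massless_dirac_global_relations_finite_interval
    (L T : ℝ) (hL : 0 < L) (hT : 0 < T)
    (Ψ₁ Ψ₂ : ℝ × ℝ → ℂ)
    (hΨ₁ : ContDiffOn ℝ 1 Ψ₁ (Set.Icc (-L) 0 ×ˢ Set.Icc 0 T))
    (hΨ₂ : ContDiffOn ℝ 1 Ψ₂ (Set.Icc (-L) 0 ×ˢ Set.Icc 0 T))
    (pde₁ : ∀ x ∈ Set.Icc (-L) (0:ℝ), ∀ t ∈ Set.Icc (0:ℝ) T,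
        derivWithin (fun s : ℝ => Ψ₁ (x, s)) (Set.Icc 0 T) t
          + derivWithin (fun y : ℝ => Ψ₁ (y, t)) (Set.Icc (-L) 0) x = 0)
    (pde₂ : ∀ x ∈ Set.Icc (-L) (0:ℝ), ∀ t ∈ Set.Icc (0:ℝ) T,
        derivWithin (fun s : ℝ => Ψ₂ (x, s)) (Set.Icc 0 T) t
          - derivWithin (fun y : ℝ => Ψ₂ (y, t)) (Set.Icc (-L) 0) x = 0) :
    ∀ k : ℂ, ∀ t ∈ Set.Icc (0:ℝ) T,
      ((∫ x in (-L)..(0:ℝ), Complex.exp (-Complex.I * k * x) * Ψ₁ (x, 0))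
        + Complex.exp (Complex.I * k * L) *
            (∫ s in (0:ℝ)..t, Complex.exp (Complex.I * k * s) * Ψ₁ (-L, s))
        - Complex.exp (Complex.I * k * t) *
            (∫ x in (-L)..(0:ℝ), Complex.exp (-Complex.I * k * x) * Ψ₁ (x, t))
        - (∫ s in (0:ℝ)..t, Complex.exp (Complex.I * k * s) * Ψ₁ (0, s)) = 0) ∧
      ((∫ x in (-L)..(0:ℝ), Complex.exp (-Complex.I * k * x) * Ψ₂ (x, 0))
        - Complex.exp (Complex.I * k * L) *
            (∫ s in (0:ℝ)..t, Complex.exp (-Complex.I * k * s) * Ψ₂ (-L, s))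
        - Complex.exp (-Complex.I * k * t) *
            (∫ x in (-L)..(0:ℝ), Complex.exp (-Complex.I * k * x) * Ψ₂ (x, t))
        + (∫ s in (0:ℝ)..t, Complex.exp (-Complex.I * k * s) * Ψ₂ (0, s)) = 0) := by
  intro k t ht
  set S : Set (ℝ × ℝ) := Set.Icc (-L) 0 ×ˢ Set.Icc 0 T with hSdef
  have hS : UniqueDiffOn ℝ S := (uniqueDiffOn_Icc (by linarith)).prod (uniqueDiffOn_Icc hT)
  have conv : ∀ Ψ : ℝ × ℝ → ℂ, ContDiffOn ℝ 1 Ψ S → ∀ p ∈ S,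
      derivWithin (fun s : ℝ => Ψ (p.1, s)) (Set.Icc 0 T) p.2
          = fderivWithin ℝ Ψ S p (0, 1)
        ∧ derivWithin (fun y : ℝ => Ψ (y, p.2)) (Set.Icc (-L) 0) p.1
          = fderivWithin ℝ Ψ S p (1, 0) := by
    rintro Ψ hΨ ⟨x, s⟩ hp
    have hF := ((hΨ.differentiableOn one_ne_zero) _ hp).hasFDerivWithinAt
    constructor
    · have hline : HasDerivWithinAt (fun s : ℝ => ((x : ℝ), s)) ((0 : ℝ), (1 : ℝ))
          (Set.Icc 0 T) s := ((hasDerivAt_const s x).prodMk (hasDerivAt_id s)).hasDerivWithinAt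
      exact (hF.comp_hasDerivWithinAt s hline (fun u hu => ⟨hp.1, hu⟩)).derivWithin
        ((uniqueDiffOn_Icc hT) s hp.2)
    · have hline : HasDerivWithinAt (fun y : ℝ => (y, s)) ((1 : ℝ), (0 : ℝ))
          (Set.Icc (-L) 0) x := ((hasDerivAt_id x).prodMk (hasDerivAt_const x s)).hasDerivWithinAt
      exact (hF.comp_hasDerivWithinAt x hline (fun u hu => (⟨hu, hp.2⟩ : (u, s) ∈ Set.Icc (-L) 0 ×ˢ Set.Icc (0:ℝ) T))).derivWithin
        ((uniqueDiffOn_Icc (by linarith : (-L:ℝ) < 0)) x hp.1)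
  constructor
  · have pde' : ∀ p ∈ S, fderivWithin ℝ Ψ₁ S p (0, 1)
        + (1 : ℂ) * fderivWithin ℝ Ψ₁ S p (1, 0) = 0 := by
      rintro ⟨x, s⟩ hp
      obtain ⟨e1, e2⟩ := conv Ψ₁ hΨ₁ (x, s) hp
      have := pde₁ x hp.1 s hp.2
      rw [e1, e2] at this
      linear_combination this
    have E := transport_relation L T hL hT k 1 Ψ₁ hΨ₁ pde' t ht
    simp only [one_mul] at E
    linear_combination -E
  · have pde' : ∀ p ∈ S, fderivWithin ℝ Ψ₂ S p (0, 1)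
        + (-1 : ℂ) * fderivWithin ℝ Ψ₂ S p (1, 0) = 0 := by
      rintro ⟨x, s⟩ hp
      obtain ⟨e1, e2⟩ := conv Ψ₂ hΨ₂ (x, s) hp
      have := pde₂ x hp.1 s hp.2
      rw [e1, e2] at this
      linear_combination this
    have E := transport_relation L T hL hT k (-1) Ψ₂ hΨ₂ pde' t ht
    simp only [neg_one_mul, neg_mul, one_mul, neg_neg] at E
    simp only [neg_mul] 
    linear_combination -E
end

section
/- Let t > 0, let g : [0,t] → ℂ be continuously differentiable, and let c ∈ ℝ satisfy c + t < 0 (so that c + s < 0 for all s ∈ [0,t]). Then the improper iterated integral vanishes: lim_{C→∞} ∫_{−C}^{C} ( ∫_0^t e^{ik(c+s)} g(s) ds ) dk = 0. -/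
open Filter intervalIntegral
open scoped FourierTransform

open MeasureTheory in
/-- Riemann–Lebesgue lemma for interval integrals, frequency along `cocompact ℝ`. -/
lemma riemannLebesgue_interval (l r : ℝ) (hlr : l ≤ r) (f : ℝ → ℂ) :
    Tendsto (fun w : ℝ => ∫ u in l..r, Complex.exp (Complex.I * w * u) * f u)
      (cocompact ℝ) (nhds 0) := by
  have hm : Tendsto (fun w : ℝ => -w / (2 * Real.pi)) (cocompact ℝ) (cocompact ℝ) := by
    rw [cocompact_eq_atBot_atTop, tendsto_sup]
    have h2π : (0:ℝ) < 2 * Real.pi := by positivity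
    constructor
    · exact (((tendsto_neg_atBot_atTop (G := ℝ)).atTop_div_const h2π)).mono_right le_sup_right
    · exact (((tendsto_neg_atTop_atBot (G := ℝ)).atBot_div_const h2π)).mono_right le_sup_left
  have key := (Real.tendsto_integral_exp_smul_cocompact
    ((Set.Ioc l r).indicator f)).comp hm
  refine key.congr fun w => ?_
  show (∫ v : ℝ, 𝐞 (-(v * (-w / (2 * Real.pi)))) • (Set.Ioc l r).indicator f v)
      = ∫ u in l..r, Complex.exp (Complex.I * w * u) * f u
  rw [intervalIntegral.integral_of_le hlr, ← MeasureTheory.integral_indicator measurableSet_Ioc]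
  congr 1
  ext v
  by_cases hv : v ∈ Set.Ioc l r
  · rw [Set.indicator_of_mem hv, Set.indicator_of_mem hv, Circle.smul_def,
      Real.fourierChar_apply]
    congr 2
    push_cast
    have : (Real.pi : ℂ) ≠ 0 := by exact_mod_cast Real.pi_ne_zero
    field_simp
  · simp [Set.indicator_of_notMem hv]

/-- Contour-deformation step of the unified transform method: if `c + t < 0` then the
improper iterated integral `lim_{C→∞} ∫_{-C}^{C} (∫_0^t e^{ik(c+s)} g(s) ds) dk` vanishes. -/
theorem contour_integral_vanishes
    (t : ℝ) (ht : 0 < t) (g : ℝ → ℂ) (hg : ContDiffOn ℝ 1 g (Set.Icc 0 t))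
    (c : ℝ) (hc : c + t < 0) :
    Tendsto (fun C : ℝ => ∫ k in (-C)..C, ∫ s in (0:ℝ)..t,
        Complex.exp (Complex.I * k * (c + s)) * g s) atTop (nhds 0) := by
  classical
  set h : ℝ → ℂ := fun s => g s / (Complex.I * ((c : ℂ) + s)) with hh
  have hne : ∀ s : ℝ, s ∈ Set.Icc (0:ℝ) t → (Complex.I * ((c : ℂ) + s)) ≠ 0 := by
    intro s hs
    refine mul_ne_zero Complex.I_ne_zero ?_
    have : ((c : ℂ) + s) = ((c + s : ℝ) : ℂ) := by push_cast; ring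
    rw [this]
    exact_mod_cast (by linarith [hs.2] : c + s ≠ 0)
  have hgc : ContinuousOn g (Set.Icc 0 t) := hg.continuousOn
  have hdc : Continuous fun s : ℝ => Complex.I * ((c : ℂ) + s) := by fun_prop
  have hhc : ContinuousOn h (Set.Icc 0 t) := hgc.div hdc.continuousOn hne
  -- the two limit pieces
  have hAc : ∀ w : ℝ, (∫ s in (0:ℝ)..t, Complex.exp (Complex.I * w * ((c:ℂ) + s)) * h s)
      = ∫ u in (0 + c)..(t + c), Complex.exp (Complex.I * w * u) * h (u - c) := by
    intro w
    rw [← intervalIntegral.integral_comp_add_right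
      (fun u : ℝ => Complex.exp (Complex.I * w * u) * h (u - c)) c]
    refine intervalIntegral.integral_congr fun s _ => ?_
    simp only [add_sub_cancel_right]
    congr 2
    push_cast
    ring
  have hRL := riemannLebesgue_interval (0 + c) (t + c) (by linarith) (fun u => h (u - c))
  have hA : Tendsto (fun C : ℝ => ∫ s in (0:ℝ)..t,
      Complex.exp (Complex.I * C * ((c:ℂ) + s)) * h s) atTop (nhds 0) := by
    have := hRL.mono_left (by rw [cocompact_eq_atBot_atTop]; exact le_sup_right : (atTop : Filter ℝ) ≤ cocompact ℝ)
    exact Tendsto.congr (fun C => (hAc C).symm) this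
  have hB : Tendsto (fun C : ℝ => ∫ s in (0:ℝ)..t,
      Complex.exp (Complex.I * ((-C : ℝ) : ℂ) * ((c:ℂ) + s)) * h s) atTop (nhds 0) := by
    have hneg : Tendsto (fun C : ℝ => -C) atTop (cocompact ℝ) := by
      rw [cocompact_eq_atBot_atTop]
      exact tendsto_neg_atTop_atBot.mono_right le_sup_left
    have := hRL.comp hneg
    exact Tendsto.congr (fun C => (hAc (-C)).symm) this
  have main : Tendsto (fun C : ℝ => (∫ s in (0:ℝ)..t,
        Complex.exp (Complex.I * C * ((c:ℂ) + s)) * h s)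
      - ∫ s in (0:ℝ)..t, Complex.exp (Complex.I * ((-C : ℝ) : ℂ) * ((c:ℂ) + s)) * h s)
      atTop (nhds 0) := by
    simpa using hA.sub hB
  refine main.congr' ?_
  filter_upwards [eventually_ge_atTop (0:ℝ)] with C hC
  symm
  -- Fubini
  have hint : MeasureTheory.Integrable
      (Function.uncurry fun k s : ℝ => Complex.exp (Complex.I * k * ((c:ℂ) + s)) * g s)
      ((MeasureTheory.volume.restrict (Set.Ioc (-C) C)).prod
        (MeasureTheory.volume.restrict (Set.Ioc 0 t))) := by
    rw [MeasureTheory.Measure.prod_restrict]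
    have hcont : ContinuousOn
        (Function.uncurry fun k s : ℝ => Complex.exp (Complex.I * k * ((c:ℂ) + s)) * g s)
        (Set.Icc (-C) C ×ˢ Set.Icc 0 t) := by
      apply ContinuousOn.mul
      · apply Continuous.continuousOn
        fun_prop
      · exact hgc.comp continuous_snd.continuousOn fun p hp => hp.2
    exact ((hcont.integrableOn_compact (isCompact_Icc.prod isCompact_Icc)).mono_set
      (Set.prod_mono Set.Ioc_subset_Icc_self Set.Ioc_subset_Icc_self))
  have swap := MeasureTheory.integral_integral_swap hint
  have hCC : -C ≤ C := by linarith
  calc (∫ k in (-C)..C, ∫ s in (0:ℝ)..t, Complex.exp (Complex.I * k * ((c:ℂ) + s)) * g s)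
      = ∫ s in Set.Ioc (0:ℝ) t, ∫ k in Set.Ioc (-C) C,
          Complex.exp (Complex.I * k * ((c:ℂ) + s)) * g s := by
        rw [intervalIntegral.integral_of_le hCC]
        simp_rw [intervalIntegral.integral_of_le ht.le]
        exact swap
    _ = ∫ s in Set.Ioc (0:ℝ) t,
          (Complex.exp (Complex.I * C * ((c:ℂ) + s)) * h s
            - Complex.exp (Complex.I * ((-C : ℝ) : ℂ) * ((c:ℂ) + s)) * h s) := by
        refine MeasureTheory.setIntegral_congr_fun measurableSet_Ioc fun s hs => ?_
        have hs' : s ∈ Set.Icc (0:ℝ) t := Set.mem_Icc_of_Ioc hs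
        have hd := hne s hs'
        have e1 : ∀ k : ℝ, Complex.exp (Complex.I * k * ((c:ℂ) + s)) * g s
            = Complex.exp ((Complex.I * ((c:ℂ) + s)) * k) * g s := by
          intro k; congr 2; ring
        rw [← intervalIntegral.integral_of_le hCC]
        simp_rw [e1]
        rw [intervalIntegral.integral_mul_const, integral_exp_mul_complex hd]
        rw [hh]
        simp only []
        push_cast
        field_simp
    _ = (∫ s in (0:ℝ)..t, Complex.exp (Complex.I * C * ((c:ℂ) + s)) * h s)
          - ∫ s in (0:ℝ)..t, Complex.exp (Complex.I * ((-C : ℝ) : ℂ) * ((c:ℂ) + s)) * h s := by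
        rw [MeasureTheory.integral_sub]
        · rw [intervalIntegral.integral_of_le ht.le, intervalIntegral.integral_of_le ht.le]
        · exact (((Complex.continuous_exp.comp (by fun_prop)).continuousOn.mul hhc).integrableOn_compact
            isCompact_Icc).mono_set Set.Ioc_subset_Icc_self
        · exact (((Complex.continuous_exp.comp (by fun_prop)).continuousOn.mul hhc).integrableOn_compact
            isCompact_Icc).mono_set Set.Ioc_subset_Icc_self
end
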